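/- Let p = mk + 1 be prime with k even, g a primitive root mod p, and X_i = g^i X_0 the cosets of the index-m multiplicative subgroup X_0. Suppose (X_0 - 1) ∩ X_0 = ∅, and for all pairs (i, j) with 0 ≤ i, j < m not both zero, (X_0 - g^j) ∩ X_i ≠ ∅. Then: (a) X_i is closed under negation for all i; (b) X_i + X_i = (Z/pZ) \ X_i for all i; and (c) X_i + X_j = (Z/pZ) \ {0} for all i ≠ j. -/

import Mathlib

open Pointwise

theorem stmt_4 (m k : ℕ) (hm : 0 < m) (hk : 0 < k) (hke : Even k)
    (hp : Nat.Prime (m * k + 1)) (g : ZMod (m * k + 1))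
    (hg : IsPrimitiveRoot g (m * k))
    (X : ℕ → Set (ZMod (m * k + 1)))
    (hX : ∀ i, X i = {x | ∃ a < k, x = g ^ (a * m + i)})
    (h1 : ((fun x => x - 1) '' X 0) ∩ X 0 = ∅)
    (h2 : ∀ i < m, ∀ j < m, ¬(i = 0 ∧ j = 0) →
      (((fun x => x - g ^ j) '' X 0) ∩ X i).Nonempty) :
    (∀ i < m, X i = -X i) ∧
    (∀ i < m, X i + X i = (X i)ᶜ) ∧
    (∀ i < m, ∀ j < m, i ≠ j → X i + X j = ({0}ᶜ : Set (ZMod (m * k + 1)))) := by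
  haveI : Fact (Nat.Prime (m * k + 1)) := ⟨hp⟩
  have hmk : 0 < m * k := Nat.mul_pos hm hk
  haveI : NeZero (m * k) := ⟨hmk.ne'⟩
  have hgu : IsUnit g := hg.isUnit hmk.ne'
  set u : (ZMod (m * k + 1))ˣ := hgu.unit with hu_def
  have hu : (u : ZMod (m * k + 1)) = g := hgu.unit_spec
  have hord : orderOf u = m * k := by
    rw [← orderOf_units, hu, ← hg.eq_orderOf]
  -- membership characterization with integer exponents
  have memX : ∀ (x : ZMod (m * k + 1)) (i : ℕ),
      x ∈ X i ↔ ∃ a : ℤ, x = ((u ^ ((a * m + i : ℤ)) : (ZMod (m * k + 1))ˣ) : ZMod (m * k + 1)) := by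
    intro x i
    rw [hX]
    constructor
    · rintro ⟨a, _, rfl⟩
      refine ⟨(a : ℤ), ?_⟩
      have : ((a : ℤ) * m + i) = ((a * m + i : ℕ) : ℤ) := by push_cast; ring
      rw [this, zpow_natCast, ← hu]
      norm_cast
    · rintro ⟨a, rfl⟩
      have hk0 : (0 : ℤ) < k := by exact_mod_cast hk
      have h1' : 0 ≤ a % k := Int.emod_nonneg a hk0.ne'
      have h2' : a % k < k := Int.emod_lt_of_pos a hk0
      refine ⟨(a % k).toNat, by omega, ?_⟩
      have hcast : (((a % k).toNat : ℤ)) = a % k := Int.toNat_of_nonneg h1'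
      have hmod : (((a % k).toNat : ℤ) * m + i) ≡ (a * m + i) [ZMOD orderOf u] := by
        rw [hord]
        have hbase : ((a % k).toNat : ℤ) ≡ a [ZMOD (k : ℤ)] := by
          rw [hcast]
          exact Int.emod_emod_of_dvd a dvd_rfl
        have := (hbase.mul_right' (c := (m : ℤ))).add_right (i : ℤ)
        have hmm : ((k : ℤ)) * m = ((m * k : ℕ) : ℤ) := by push_cast; ring
        rwa [hmm] at this
      have := (zpow_eq_zpow_iff_modEq (x := u)).mpr hmod
      rw [← this]
      have : (((a % k).toNat * m + i : ℕ) : ℤ) = ((a % k).toNat : ℤ) * m + i := by push_cast; ring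
      rw [← this, zpow_natCast, ← hu]
      norm_cast
  have umem : ∀ (i : ℕ) (a : ℤ),
      ((u ^ ((a * m + i : ℤ)) : (ZMod (m * k + 1))ˣ) : ZMod (m * k + 1)) ∈ X i :=
    fun i a => (memX _ i).2 ⟨a, rfl⟩
  have mem0 : ∀ i, (0 : ZMod (m * k + 1)) ∉ X i := by
    intro i h
    obtain ⟨a, ha⟩ := (memX _ i).1 h
    exact Units.ne_zero _ ha.symm
  -- -1 ∈ X 0
  obtain ⟨c, hc⟩ := hke
  have hc0 : 0 < c := by omega
  have hk2 : k / 2 = c := by omega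
  have hneg1 : g ^ (m * (k / 2)) = -1 := by
    have hsq : g ^ (m * (k / 2)) * g ^ (m * (k / 2)) = 1 := by
      rw [← pow_add]
      have : m * (k / 2) + m * (k / 2) = m * k := by rw [hk2, hc]; ring
      rw [this, hg.pow_eq_one]
    rcases mul_self_eq_one_iff.1 hsq with h | h
    · refine absurd h (hg.pow_ne_one_of_pos_of_lt (Nat.mul_pos hm (show 0 < k / 2 by omega)).ne' ?_)
      rw [hk2, hc]
      have := (Nat.mul_lt_mul_left hm).2 (show c < c + c by omega)
      omega
    · exact h
  have neg_mem : ∀ (i : ℕ) (x : ZMod (m * k + 1)), x ∈ X i → -x ∈ X i := by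
    intro i x hx
    obtain ⟨a, rfl⟩ := (memX x i).1 hx
    refine (memX _ i).2 ⟨a + (k / 2 : ℕ), ?_⟩
    have hexp : ((a + (k / 2 : ℕ)) * m + i : ℤ) = ((m * (k / 2) : ℕ) : ℤ) + (a * m + i) := by
      push_cast; ring
    have hval : ((u ^ (((m * (k / 2) : ℕ)) : ℤ) : (ZMod (m * k + 1))ˣ) : ZMod (m * k + 1)) = -1 := by
      rw [zpow_natCast, ← hneg1, ← hu]
      norm_cast
    have key : u ^ ((((m * (k / 2) : ℕ)) : ℤ) + (a * m + i)) =
        u ^ ((((m * (k / 2) : ℕ)) : ℤ)) * u ^ ((a * m + i : ℤ)) := zpow_add u _ _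
    rw [hexp, key, Units.val_mul, hval]
    ring
  -- every nonzero element is in some X r, r < m
  have exists_mem : ∀ x : ZMod (m * k + 1), x ≠ 0 → ∃ r < m, x ∈ X r := by
    intro x hx
    have hx1 : x ^ (m * k) = 1 := by
      have := ZMod.pow_card_sub_one_eq_one (p := m * k + 1) hx
      simpa using this
    obtain ⟨b, hb, rfl⟩ := hg.eq_pow_of_pow_eq_one hx1
    refine ⟨b % m, Nat.mod_lt _ hm, ?_⟩
    refine (memX _ _).2 ⟨(b / m : ℕ), ?_⟩
    have : ((b / m : ℕ) : ℤ) * m + (b % m : ℕ) = ((b : ℕ) : ℤ) := by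
      exact_mod_cast congrArg (Nat.cast : ℕ → ℤ) (Nat.div_add_mod' b m)
    rw [this, zpow_natCast, ← hu]
    norm_cast
  -- disjointness
  have disj : ∀ i, i < m → ∀ j, j < m → ∀ x : ZMod (m * k + 1),
      x ∈ X i → x ∈ X j → i = j := by
    intro i hi j hj x hxi hxj
    obtain ⟨a, rfl⟩ := (memX x i).1 hxi
    obtain ⟨b, hb⟩ := (memX _ j).1 hxj
    have := (zpow_eq_zpow_iff_modEq (x := u)).1 (Units.ext hb)
    rw [hord] at this
    have hdvdm : ((m : ℤ)) ∣ ((m * k : ℕ) : ℤ) := ⟨k, by push_cast; ring⟩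
    have hmm := (Int.ModEq.of_dvd hdvdm this)
    have h1 : (a * m + i) % (m : ℤ) = i % m := by
      rw [add_comm]; exact Int.add_mul_emod_self_right _ _ _
    have h2 : (b * m + j) % (m : ℤ) = j % m := by
      rw [add_comm]; exact Int.add_mul_emod_self_right _ _ _
    have hfin : (i : ℤ) % m = (j : ℤ) % m := by
      rw [← h1, ← h2]; exact hmm
    have e1 : (i : ℤ) % m = i := Int.emod_eq_of_lt (by positivity) (by exact_mod_cast hi)
    have e2 : (j : ℤ) % m = j := Int.emod_eq_of_lt (by positivity) (by exact_mod_cast hj)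
    rw [e1, e2] at hfin
    exact_mod_cast hfin
  -- coverage lemma
  have cover : ∀ i, i < m → ∀ j, j < m → ∀ r, r < m → ¬(i = r ∧ j = r) →
      X r ⊆ X i + X j := by
    intro i hi j hj r hr hne
    have key : ∀ s : ℕ, s < m → ∃ s' : ℕ, s' < m ∧
        (((s' : ℤ) + r = s) ∨ ((s' : ℤ) + r = (s : ℤ) + m)) ∧ (s' = 0 → s = r) := by
      intro s hs
      refine ⟨if r ≤ s then s - r else s + m - r, ?_, ?_, ?_⟩ <;> split <;> omega
    obtain ⟨i', hi'm, hi'e, hi'0⟩ := key i hi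
    obtain ⟨j', hj'm, hj'e, hj'0⟩ := key j hj
    have hne' : ¬(i' = 0 ∧ j' = 0) := by
      rintro ⟨hii, hjj⟩
      exact hne ⟨hi'0 hii, hj'0 hjj⟩
    obtain ⟨x, ⟨y, hy0, hyx⟩, hxi⟩ := h2 i' hi'm j' hj'm hne'
    simp only at hyx
    subst hyx
    obtain ⟨b, rfl⟩ := (memX y 0).1 hy0
    obtain ⟨c, hc⟩ := (memX _ i').1 hxi
    intro z hz
    obtain ⟨a, rfl⟩ := (memX z r).1 hz
    set t : ℤ := (a - b) * m + r with ht
    have hgj' : (g : ZMod (m * k + 1)) ^ j' =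
        ((u ^ ((0 * (m : ℤ) + j' : ℤ)) : (ZMod (m * k + 1))ˣ) : ZMod (m * k + 1)) := by
      rw [show ((0 : ℤ) * m + j' : ℤ) = ((j' : ℕ) : ℤ) by ring, zpow_natCast, ← hu]
      norm_cast
    have hzeq : ((u ^ ((a * m + r : ℤ)) : (ZMod (m * k + 1))ˣ) : ZMod (m * k + 1)) =
        ((u ^ t : (ZMod (m * k + 1))ˣ) : ZMod (m * k + 1)) *
          ((u ^ ((b * m + ((0:ℕ):ℤ) : ℤ)) : (ZMod (m * k + 1))ˣ) : ZMod (m * k + 1)) := by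
      rw [← Units.val_mul, ← zpow_add]
      congr 2
      ring
    have hsplit : ((u ^ ((a * m + r : ℤ)) : (ZMod (m * k + 1))ˣ) : ZMod (m * k + 1)) =
        ((u ^ t : (ZMod (m * k + 1))ˣ) : ZMod (m * k + 1)) *
            (((u ^ ((b * m + ((0:ℕ):ℤ) : ℤ)) : (ZMod (m * k + 1))ˣ) : ZMod (m * k + 1)) - g ^ j') +
          ((u ^ t : (ZMod (m * k + 1))ˣ) : ZMod (m * k + 1)) * g ^ j' := by
      rw [hzeq]; ring
    rw [hsplit]
    apply Set.add_mem_add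
    · rw [hc, ← Units.val_mul, ← zpow_add]
      rcases hi'e with he | he
      · have : t + (c * m + i') = (a - b + c) * m + i := by
          rw [ht]; linear_combination he
        rw [this]; exact umem i _
      · have : t + (c * m + i') = (a - b + c + 1) * m + i := by
          rw [ht]; linear_combination he
        rw [this]; exact umem i _
    · rw [hgj', ← Units.val_mul, ← zpow_add]
      rcases hj'e with he | he
      · have : t + (0 * m + j') = (a - b) * m + j := by
          rw [ht]; linear_combination he
        rw [this]; exact umem j _
      · have : t + (0 * m + j') = (a - b + 1) * m + j := by
          rw [ht]; linear_combination he
        rw [this]; exact umem j _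
  -- X i + X i avoids X i
  have not_cover : ∀ (i : ℕ) (z : ZMod (m * k + 1)), z ∈ X i → z ∉ X i + X i := by
    intro i z hz hmem
    obtain ⟨x, hx, y, hy, hxy⟩ := hmem
    obtain ⟨a, ha⟩ := (memX z i).1 hz
    obtain ⟨b, hb⟩ := (memX x i).1 hx
    obtain ⟨c, hc⟩ := (memX y i).1 hy
    set w : ZMod (m * k + 1) := ((u ^ (((a - b) * m + ((0:ℕ):ℤ) : ℤ)) : (ZMod (m * k + 1))ˣ) : ZMod (m * k + 1)) with hw
    set v : ZMod (m * k + 1) := ((u ^ (((c - b) * m + ((0:ℕ):ℤ) : ℤ)) : (ZMod (m * k + 1))ˣ) : ZMod (m * k + 1)) with hv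
    have hzw : z = x * w := by
      rw [ha, hb, hw, ← Units.val_mul, ← zpow_add]
      congr 2; ring
    have hyv : y = x * v := by
      rw [hc, hb, hv, ← Units.val_mul, ← zpow_add]
      congr 2; ring
    have hx0 : x ≠ 0 := by rw [hb]; exact Units.ne_zero _
    have hwv : w = 1 + v := by
      have : x * w = x * (1 + v) := by
        rw [← hzw, mul_add, mul_one, ← hyv, ← hxy]
      exact mul_left_cancel₀ hx0 this
    have hwX : w ∈ X 0 := umem 0 _
    have hvX : v ∈ X 0 := umem 0 _
    have : w - 1 ∈ ((fun x => x - 1) '' X 0) ∩ X 0 := by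
      refine ⟨⟨w, hwX, rfl⟩, ?_⟩
      rw [hwv]; simpa using hvX
    rw [h1] at this
    exact this
  refine ⟨?_, ?_, ?_⟩
  · -- (a)
    intro i _
    ext x
    constructor
    · intro hx
      rw [Set.mem_neg]
      exact neg_mem i x hx
    · intro hx
      rw [Set.mem_neg] at hx
      have := neg_mem i (-x) hx
      simpa using this
  · -- (b)
    intro i hi
    ext z
    constructor
    · intro hz
      exact fun hzi => not_cover i z hzi hz
    · intro hz
      by_cases hz0 : z = 0
      · subst hz0
        have hx : g ^ (0 * m + i) ∈ X i := by
          rw [hX]; exact ⟨0, hk, rfl⟩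
        have hnx : -(g ^ (0 * m + i)) ∈ X i := neg_mem i _ hx
        exact ⟨g ^ (0 * m + i), hx, -(g ^ (0 * m + i)), hnx, by ring⟩
      · obtain ⟨r, hr, hzr⟩ := exists_mem z hz0
        have hri : ¬(i = r ∧ i = r) := by
          rintro ⟨rfl, -⟩
          exact hz hzr
        exact cover i hi i hi r hr hri hzr
  · -- (c)
    intro i hi j hj hij
    ext z
    constructor
    · intro hz
      simp only [Set.mem_compl_iff, Set.mem_singleton_iff]
      intro h0
      obtain ⟨x, hx, y, hy, hxy⟩ := hz
      have hsum : x + y = 0 := by simpa [h0] using hxy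
      have hy' : y = -x := eq_neg_of_add_eq_zero_right hsum
      have hyXi : y ∈ X i := by rw [hy']; exact neg_mem i x hx
      exact hij (disj i hi j hj y hyXi hy)
    · intro hz
      simp only [Set.mem_compl_iff, Set.mem_singleton_iff] at hz
      obtain ⟨r, hr, hzr⟩ := exists_mem z hz
      have : ¬(i = r ∧ j = r) := by rintro ⟨rfl, rfl⟩; exact hij rfl
      exact cover i hi j hj r hr this hzr
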